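/- (Kakutani skyscraper is measure preserving.) Let (Ω, μ, τ) be a probability preserving transformation and φ : Ω → ℕ measurable with φ ≥ 1. Define X := {(ω,n) ∈ Ω × ℕ : 1 ≤ n ≤ φ(ω)}, m := (μ × counting measure) restricted to X, and T(ω,n) := (ω, n+1) if n < φ(ω), T(ω,n) := (τω, 1) if n = φ(ω). Then T preserves m. -/

import Mathlib

open MeasureTheory

/-- The Kakutani skyscraper map over `(Ω,μ,τ)` with height `φ`. -/
def skyscraperMap {Ω : Type*} (τ : Ω → Ω) (φ : Ω → ℕ) : Ω × ℕ → Ω × ℕ :=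
  fun p => if p.2 < φ p.1 then (p.1, p.2 + 1) else (τ p.1, 1)

/-- The Kakutani skyscraper over a probability preserving transformation `(Ω,μ,τ)`
with measurable height `φ ≥ 1` preserves the measure
`m = (μ × counting) restricted to X = {(ω,n) : 1 ≤ n ≤ φ(ω)}`. -/
theorem skyscraper_measurePreserving
    {Ω : Type*} [MeasurableSpace Ω] (μ : Measure Ω) [IsProbabilityMeasure μ]
    (τ : Ω → Ω) (hτ : MeasurePreserving τ μ μ)
    (φ : Ω → ℕ) (hφ : Measurable φ) (hφ1 : ∀ ω, 1 ≤ φ ω) :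
    MeasurePreserving (skyscraperMap τ φ)
      ((μ.prod (Measure.count : Measure ℕ)).restrict
        {p : Ω × ℕ | 1 ≤ p.2 ∧ p.2 ≤ φ p.1})
      ((μ.prod (Measure.count : Measure ℕ)).restrict
        {p : Ω × ℕ | 1 ≤ p.2 ∧ p.2 ≤ φ p.1}) := by
  classical
  have hτm := hτ.measurable
  -- the slices
  set A : ℕ → Set Ω := fun n => {ω | 1 ≤ n ∧ n ≤ φ ω} with hAdef
  have hA : ∀ n, MeasurableSet (A n) := by
    intro n
    by_cases h : 1 ≤ n
    · have : A n = φ ⁻¹' Set.Ici n := by ext ω; simp [hAdef, h]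
      rw [this]; exact hφ measurableSet_Ici
    · have : A n = ∅ := by ext ω; simp [hAdef, h]
      rw [this]; exact MeasurableSet.empty
  have hA0 : A 0 = ∅ := by ext ω; simp [hAdef]
  have hA1 : A 1 = Set.univ := by ext ω; simp [hAdef, hφ1 ω]
  have hXm : MeasurableSet {p : Ω × ℕ | 1 ≤ p.2 ∧ p.2 ≤ φ p.1} := by
    rw [Set.setOf_and]
    exact (measurable_snd measurableSet_Ici).inter
      (measurableSet_le measurable_snd (hφ.comp measurable_fst))
  have hlt : MeasurableSet {p : Ω × ℕ | p.2 < φ p.1} :=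
    measurableSet_lt measurable_snd (hφ.comp measurable_fst)
  have hT : Measurable (skyscraperMap τ φ) := by
    have h1 : Measurable fun p : Ω × ℕ => (p.1, p.2 + 1) :=
      measurable_fst.prodMk (measurable_snd.add_const 1)
    have h2 : Measurable fun p : Ω × ℕ => (τ p.1, (1 : ℕ)) :=
      (hτm.comp measurable_fst).prodMk measurable_const
    exact Measurable.ite hlt h1 h2
  have hι : ∀ n : ℕ, Measurable fun ω : Ω => (ω, n) :=
    fun n => measurable_id.prodMk measurable_const
  -- decompose the restricted product measure as a sum of slice measures
  have key : (μ.prod (Measure.count : Measure ℕ)).restrict {p : Ω × ℕ | 1 ≤ p.2 ∧ p.2 ≤ φ p.1}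
      = Measure.sum (fun n : ℕ => Measure.map (fun ω => (ω, n)) (μ.restrict (A n))) := by
    have hc : (Measure.count : Measure ℕ) = Measure.sum Measure.dirac := rfl
    rw [hc, Measure.prod_sum_right, Measure.restrict_sum _ hXm]
    refine congrArg Measure.sum (funext fun n => ?_)
    rw [Measure.prod_dirac, Measure.restrict_map (hι n) hXm]
    rfl
  refine ⟨hT, ?_⟩
  rw [key]
  refine Measure.ext fun s hs => ?_
  have hsn : ∀ n : ℕ, MeasurableSet {ω | (ω, n) ∈ s} := fun n => (hι n) hs
  have hE : MeasurableSet {ω | (τ ω, (1 : ℕ)) ∈ s} := (hτm.prodMk measurable_const) hs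
  have hν : ∀ (n : ℕ) (t : Set (Ω × ℕ)), MeasurableSet t →
      (Measure.map (fun ω => (ω, n)) (μ.restrict (A n))) t = μ ({ω | (ω, n) ∈ t} ∩ A n) := by
    intro n t ht
    rw [Measure.map_apply (hι n) ht, Measure.restrict_apply ((hι n) ht)]
    rfl
  rw [Measure.map_apply hT hs, Measure.sum_apply _ (hT hs), Measure.sum_apply _ hs]
  set f : ℕ → ENNReal := fun n => μ ({ω | (ω, n) ∈ s} ∩ A n) with hf
  have hf0 : f 0 = 0 := by simp [hf, hA0]
  -- split each term of the left-hand sum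
  have hsplit : ∀ n : ℕ, 1 ≤ n →
      μ ({ω | skyscraperMap τ φ (ω, n) ∈ s} ∩ A n)
        = f (n + 1) + μ ({ω | (τ ω, (1 : ℕ)) ∈ s} ∩ {ω | φ ω = n}) := by
    intro n hn
    have hdecomp : {ω | skyscraperMap τ φ (ω, n) ∈ s} ∩ A n
        = ({ω | (ω, n + 1) ∈ s} ∩ A (n + 1)) ∪
          ({ω | (τ ω, (1 : ℕ)) ∈ s} ∩ {ω | φ ω = n}) := by
      ext ω
      by_cases h : n < φ ω
      · have h3 : φ ω ≠ n := by omega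
        simp only [skyscraperMap, Set.mem_inter_iff, Set.mem_union, Set.mem_setOf_eq, hAdef,
          if_pos h, h3]
        constructor
        · rintro ⟨hm, -⟩; exact Or.inl ⟨hm, by omega, h⟩
        · rintro (⟨hm, -⟩ | ⟨-, hc⟩)
          · exact ⟨hm, hn, by omega⟩
          · exact hc.elim
      · simp only [skyscraperMap, Set.mem_inter_iff, Set.mem_union, Set.mem_setOf_eq, hAdef,
          if_neg h]
        constructor
        · rintro ⟨hm, -, hle⟩; exact Or.inr ⟨hm, by omega⟩
        · rintro (⟨-, -, hc⟩ | ⟨hm, hc⟩)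
          · omega
          · exact ⟨hm, hn, by omega⟩
    have hmeasn : MeasurableSet ({ω | (τ ω, (1 : ℕ)) ∈ s} ∩ {ω | φ ω = n}) := by
      refine hE.inter ?_
      exact hφ (measurableSet_singleton n)
    have hdisj2 : Disjoint ({ω | (ω, n + 1) ∈ s} ∩ A (n + 1))
        ({ω | (τ ω, (1 : ℕ)) ∈ s} ∩ {ω | φ ω = n}) := by
      refine Set.disjoint_left.mpr ?_
      rintro ω ⟨-, -, hle⟩ ⟨-, hc⟩
      simp only [Set.mem_setOf_eq] at hc hle
      omega
    rw [hdecomp, measure_union hdisj2 hmeasn]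
  have step1 : ∀ n : ℕ,
      (Measure.map (fun ω => (ω, n)) (μ.restrict (A n))) (skyscraperMap τ φ ⁻¹' s)
        = μ ({ω | skyscraperMap τ φ (ω, n) ∈ s} ∩ A n) := by
    intro n; rw [hν n _ (hT hs)]; rfl
  -- abbreviations for the two parts
  set u : ℕ → ENNReal := fun n => if 1 ≤ n then f (n + 1) else 0 with hu
  set v : ℕ → ENNReal := fun n => μ ({ω | (τ ω, (1 : ℕ)) ∈ s} ∩ {ω | φ ω = n}) with hv
  have hterm : ∀ n : ℕ,
      μ ({ω | skyscraperMap τ φ (ω, n) ∈ s} ∩ A n) = u n + v n := by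
    intro n
    by_cases hn : 1 ≤ n
    · rw [hsplit n hn, hu]; simp [hn, hv]
    · have hn0 : n = 0 := by omega
      subst hn0
      have hv0 : v 0 = 0 := by
        have : {ω | φ ω = 0} = (∅ : Set Ω) := by
          ext ω; simp; have := hφ1 ω; omega
        simp [hv, this]
      simp [hA0, hu, hv0]
  -- sum of the v part equals f 1
  have hvsum : ∑' n, v n = f 1 := by
    have hdisj : Pairwise (Function.onFun Disjoint
        fun n : ℕ => {ω | (τ ω, (1 : ℕ)) ∈ s} ∩ {ω | φ ω = n}) := by
      intro i j hij
      refine Set.disjoint_left.mpr ?_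
      rintro ω ⟨-, hi⟩ ⟨-, hj⟩
      simp only [Set.mem_setOf_eq] at hi hj
      exact hij (hi ▸ hj ▸ rfl)
    have hmeas : ∀ n : ℕ,
        MeasurableSet ({ω | (τ ω, (1 : ℕ)) ∈ s} ∩ {ω | φ ω = n}) :=
      fun n => hE.inter (hφ (measurableSet_singleton n))
    have hUnion : (⋃ n : ℕ, {ω | (τ ω, (1 : ℕ)) ∈ s} ∩ {ω | φ ω = n})
        = {ω | (τ ω, (1 : ℕ)) ∈ s} := by
      ext ω; simp
    have := measure_iUnion (μ := μ) hdisj hmeas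
    rw [hUnion] at this
    have hpre : μ {ω | (τ ω, (1 : ℕ)) ∈ s} = μ {ω | (ω, (1 : ℕ)) ∈ s} := by
      have : {ω | (τ ω, (1 : ℕ)) ∈ s} = τ ⁻¹' {ω | (ω, (1 : ℕ)) ∈ s} := rfl
      rw [this, hτ.measure_preimage (hsn 1).nullMeasurableSet]
    have hf1 : f 1 = μ {ω | (ω, (1 : ℕ)) ∈ s} := by
      rw [hf]; simp [hA1]
    rw [hv]
    rw [← this, hpre, hf1]
  -- sum of the u part
  have husum : ∑' n, u n = ∑' n, f (n + 2) := by
    rw [tsum_eq_zero_add' ENNReal.summable]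
    have h0 : u 0 = 0 := by simp [hu]
    have h1 : ∀ n : ℕ, u (n + 1) = f (n + 2) := by
      intro n; simp [hu]
    simp only [h0, h1, zero_add]
  calc ∑' n, (Measure.map (fun ω => (ω, n)) (μ.restrict (A n))) (skyscraperMap τ φ ⁻¹' s)
      = ∑' n, (u n + v n) := by
        refine tsum_congr fun n => ?_
        rw [step1 n, hterm n]
    _ = (∑' n, u n) + ∑' n, v n := ENNReal.tsum_add
    _ = (∑' n, f (n + 2)) + f 1 := by rw [husum, hvsum]
    _ = ∑' n, f n := by
        rw [tsum_eq_zero_add' (f := f) ENNReal.summable,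
          tsum_eq_zero_add' (f := fun n => f (n + 1)) ENNReal.summable, hf0, zero_add,
          add_comm]
    _ = ∑' n, (Measure.map (fun ω => (ω, n)) (μ.restrict (A n))) s := by
        refine tsum_congr fun n => ?_
        rw [hν n s hs]
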